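/- Suppose (p_i : i < κ) is a sequence of conditions in Q_D such that (1) p_i ≤^pr p_j whenever i < j < κ, and (2) for every i < κ, if i ∈ A_{p_j} for all j < i and i > sup(u_{p_0}), then i ∈ A_{p_j} for every j with i ≤ j < κ. Then the sequence has an upper bound in Q_D; in fact the pair (u_{p_0}, Δ \ (sup(u_{p_0})+1)) is an upper bound, where Δ = {α < κ : α ∈ A_{p_i} for all i < α} is the diagonal intersection of the sets A_{p_i}. -/

import Mathlib

open Set

/-- A normal ultrafilter on the set of ordinals below `κ.ord`. -/
structure NormalUltrafilterOn (κ : Cardinal.{0}) where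
  sets : Set (Set Ordinal)
  mem_subset : ∀ A ∈ sets, A ⊆ Set.Iio κ.ord
  univ_mem : Set.Iio κ.ord ∈ sets
  empty_not_mem : ∅ ∉ sets
  superset_mem : ∀ A B : Set Ordinal, A ∈ sets → A ⊆ B → B ⊆ Set.Iio κ.ord → B ∈ sets
  ultra : ∀ A : Set Ordinal, A ⊆ Set.Iio κ.ord → A ∈ sets ∨ (Set.Iio κ.ord \ A) ∈ sets
  complete : ∀ S : Set (Set Ordinal), S ⊆ sets → S.Nonempty →
    Cardinal.mk S < Cardinal.lift.{1} κ → ⋂₀ S ∈ sets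
  nonprincipal : ∀ α : Ordinal, (Set.Iio κ.ord \ {α}) ∈ sets
  normal : ∀ f : Ordinal → Ordinal, ∀ A ∈ sets, (∀ α ∈ A, f α < α) →
    ∃ B ∈ sets, ∃ γ : Ordinal, ∀ α ∈ B, f α = γ

/-- A condition in the forcing `Q_D`. -/
structure QCond (κ : Cardinal.{0}) (D : NormalUltrafilterOn κ) where
  u : Set Ordinal
  A : Set Ordinal
  u_subset : u ⊆ Set.Iio κ.ord
  u_small : Cardinal.mk u < Cardinal.lift.{1} κ
  A_mem : A ∈ D.sets

/-- The order of `Q_D`. -/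
def QLE {κ : Cardinal.{0}} {D : NormalUltrafilterOn κ} (p q : QCond κ D) : Prop :=
  p.u ⊆ q.u ∧ q.A ⊆ p.A ∧ q.u \ p.u ⊆ p.A ∧ ∀ α ∈ p.u, ∀ β ∈ q.u \ p.u, α < β

/-- The pure extension order of `Q_D`: `p ≤^pr q` iff `p ≤ q` and `u_p = u_q`. -/
def QLEpr {κ : Cardinal.{0}} {D : NormalUltrafilterOn κ} (p q : QCond κ D) : Prop :=
  QLE p q ∧ p.u = q.u

theorem stmt1 (κ : Cardinal.{0}) (hκ : Cardinal.aleph0 < κ) (D : NormalUltrafilterOn κ)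
    (h0 : (0 : Ordinal) < κ.ord)
    (p : ∀ i, i < κ.ord → QCond κ D)
    (hpr : ∀ i j (hi : i < κ.ord) (hj : j < κ.ord), i < j → QLEpr (p i hi) (p j hj))
    (hcoh : ∀ i, i < κ.ord → (∀ j (hj : j < κ.ord), j < i → i ∈ (p j hj).A) →
      sSup (p 0 h0).u < i → ∀ j (hj : j < κ.ord), i ≤ j → i ∈ (p j hj).A) :
    ∃ q : QCond κ D,
      q.u = (p 0 h0).u ∧
      q.A = {α | α < κ.ord ∧ ∀ j (hj : j < κ.ord), j < α → α ∈ (p j hj).A} \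
              Set.Iio (sSup (p 0 h0).u + 1) ∧
      ∀ i (hi : i < κ.ord), QLE (p i hi) q := by
  classical
  set s := sSup (p 0 h0).u with hs
  have hκord : Cardinal.aleph0 ≤ κ := hκ.le
  have hlim : Order.IsSuccLimit κ.ord := Cardinal.isSuccLimit_ord hκord
  have haleph0lt : (Cardinal.aleph0 : Cardinal.{1}) < Cardinal.lift.{1} κ := by
    rw [← Cardinal.lift_aleph0.{1,0}]
    exact Cardinal.lift_lt.mpr hκ
  -- intersection of two sets in D
  have hinter : ∀ A B : Set Ordinal, A ∈ D.sets → B ∈ D.sets → A ∩ B ∈ D.sets := by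
    intro A B hA hB
    have hfin : ({A, B} : Set (Set Ordinal)).Finite :=
      Set.Finite.insert _ (Set.finite_singleton _)
    have := D.complete {A, B} (by
        intro X hX
        rcases hX with rfl | hX
        · exact hA
        · rcases hX with rfl; exact hB)
      ⟨A, by simp⟩ (lt_trans hfin.lt_aleph0 haleph0lt)
    rwa [Set.sInter_pair] at this
  -- complement of a small set is in D
  have hcompl : ∀ T : Set Ordinal, T ⊆ Set.Iio κ.ord → Cardinal.mk T < Cardinal.lift.{1} κ →
      Set.Iio κ.ord \ T ∈ D.sets := by
    intro T hTsub hTsmall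
    rcases T.eq_empty_or_nonempty with rfl | ⟨a0, ha0⟩
    · simpa using D.univ_mem
    · have hmem : ⋂₀ ((fun a => Set.Iio κ.ord \ {a}) '' T) ∈ D.sets := by
        apply D.complete
        · rintro X ⟨a, _, rfl⟩
          exact D.nonprincipal a
        · exact ⟨_, ⟨a0, ha0, rfl⟩⟩
        · exact lt_of_le_of_lt (Cardinal.mk_image_le) hTsmall
      have heq : ⋂₀ ((fun a => Set.Iio κ.ord \ {a}) '' T) = Set.Iio κ.ord \ T := by
        ext x
        simp only [Set.sInter_image, Set.mem_iInter, Set.mem_diff, Set.mem_singleton_iff,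
          Set.mem_Iio]
        constructor
        · intro h
          exact ⟨(h a0 ha0).1, fun hx => (h x hx).2 rfl⟩
        · rintro ⟨hx, hxT⟩ a ha
          exact ⟨hx, fun hh => hxT (hh ▸ ha)⟩
      rwa [heq] at hmem
  -- sSup of a small set of ordinals below κ.ord is below κ.ord
  have hsup_lt : ∀ v : Set Ordinal, v ⊆ Set.Iio κ.ord → Cardinal.mk v < Cardinal.lift.{1} κ →
      sSup v < κ.ord := by
    intro v hvsub hvsmall
    rcases v.eq_empty_or_nonempty with rfl | hvne
    · simpa using hlim.pos
    · have hmem : ⋂₀ ((fun b => Set.Iio κ.ord \ Set.Iic b) '' v) ∈ D.sets := by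
        apply D.complete
        · rintro X ⟨b, hb, rfl⟩
          have hb1 : b + 1 < κ.ord := hlim.succ_lt (hvsub hb)
          have : Set.Iio κ.ord \ Set.Iio (b + 1) ∈ D.sets := by
            apply hcompl
            · intro x hx
              exact lt_of_lt_of_le hx hb1.le
            · rw [Ordinal.mk_Iio_ordinal]
              exact Cardinal.lift_lt.mpr (Cardinal.lt_ord.mp hb1)
          have heq : Set.Iio κ.ord \ Set.Iio (b + 1) = Set.Iio κ.ord \ Set.Iic b := by
            ext x
            simp [Order.lt_add_one_iff]
          rwa [heq] at this
        · exact ⟨_, ⟨hvne.choose, hvne.choose_spec, rfl⟩⟩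
        · exact lt_of_le_of_lt (Cardinal.mk_image_le) hvsmall
      have hne : (⋂₀ ((fun b => Set.Iio κ.ord \ Set.Iic b) '' v)).Nonempty := by
        rw [Set.nonempty_iff_ne_empty]
        intro h
        rw [h] at hmem
        exact D.empty_not_mem hmem
      obtain ⟨x, hx⟩ := hne
      simp only [Set.sInter_image, Set.mem_iInter, Set.mem_diff, Set.mem_Iio,
        Set.mem_Iic] at hx
      have hxκ : x < κ.ord := (hx hvne.choose hvne.choose_spec).1
      refine lt_of_le_of_lt (csSup_le hvne fun b hb => ?_) hxκ
      exact le_of_not_ge (hx b hb).2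
  -- s < κ.ord
  have hsκ : s < κ.ord := hsup_lt _ (p 0 h0).u_subset (p 0 h0).u_small
  have hs1κ : s + 1 < κ.ord := hlim.succ_lt hsκ
  -- all u's are equal
  have hu : ∀ i (hi : i < κ.ord), (p i hi).u = (p 0 h0).u := by
    intro i hi
    rcases eq_or_ne i 0 with rfl | hne
    · rfl
    · exact ((hpr 0 i h0 hi (pos_iff_ne_zero.mpr hne)).2).symm
  -- the diagonal intersection
  set Δ : Set Ordinal :=
    {α | α < κ.ord ∧ ∀ j (hj : j < κ.ord), j < α → α ∈ (p j hj).A} with hΔ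
  have hΔsub : Δ ⊆ Set.Iio κ.ord := fun α hα => hα.1
  -- Δ ∈ D.sets via normality
  have hΔmem : Δ ∈ D.sets := by
    by_contra hΔnot
    have hC : Set.Iio κ.ord \ Δ ∈ D.sets := (D.ultra Δ hΔsub).resolve_left hΔnot
    set f : Ordinal → Ordinal := fun α =>
      if h : ∃ j, ∃ hj : j < κ.ord, j < α ∧ α ∉ (p j hj).A then h.choose else 0 with hf
    have hfspec : ∀ α ∈ Set.Iio κ.ord \ Δ,
        f α < α ∧ ∃ hj : f α < κ.ord, α ∉ (p (f α) hj).A := by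
      intro α hα
      obtain ⟨hακ, hαΔ⟩ := hα
      have hex : ∃ j, ∃ hj : j < κ.ord, j < α ∧ α ∉ (p j hj).A := by
        by_contra hcon
        push_neg at hcon
        exact hαΔ ⟨hακ, fun j hj hjα => hcon j hj hjα⟩
      obtain ⟨hj, hjα, hjnot⟩ := hex.choose_spec
      simp only [hf, dif_pos hex]
      exact ⟨hjα, hj, hjnot⟩
    obtain ⟨B, hB, γ, hγ⟩ := D.normal f _ hC (fun α hα => (hfspec α hα).1)
    have hB' : B ∩ (Set.Iio κ.ord \ Δ) ∈ D.sets := hinter _ _ hB hC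
    have hB'ne : (B ∩ (Set.Iio κ.ord \ Δ)).Nonempty := by
      rw [Set.nonempty_iff_ne_empty]; intro h; rw [h] at hB'; exact D.empty_not_mem hB'
    obtain ⟨α₀, hα₀B, hα₀C⟩ := hB'ne
    have hγκ : γ < κ.ord := by
      have h1 : f α₀ < α₀ := (hfspec α₀ hα₀C).1
      rw [hγ α₀ hα₀B] at h1
      exact lt_trans h1 hα₀C.1
    have hB'' : B ∩ (Set.Iio κ.ord \ Δ) ∩ (p γ hγκ).A ∈ D.sets :=
      hinter _ _ hB' (p γ hγκ).A_mem
    have hB''ne : (B ∩ (Set.Iio κ.ord \ Δ) ∩ (p γ hγκ).A).Nonempty := by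
      rw [Set.nonempty_iff_ne_empty]; intro h; rw [h] at hB''; exact D.empty_not_mem hB''
    obtain ⟨α, ⟨hαB, hαC⟩, hαA⟩ := hB''ne
    obtain ⟨hj, hnot⟩ := (hfspec α hαC).2
    have key : ∀ j (hj : j < κ.ord), j = γ → α ∉ (p j hj).A → False := by
      rintro j hj rfl hnot
      exact hnot hαA
    exact key (f α) hj (hγ α hαB) hnot
  -- the final A set
  have hAmem : Δ \ Set.Iio (s + 1) ∈ D.sets := by
    have h2 : Set.Iio κ.ord \ Set.Iio (s + 1) ∈ D.sets := by
      apply hcompl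
      · intro x hx; exact lt_of_lt_of_le hx hs1κ.le
      · rw [Ordinal.mk_Iio_ordinal]
        exact Cardinal.lift_lt.mpr (Cardinal.lt_ord.mp hs1κ)
    have heq : Δ ∩ (Set.Iio κ.ord \ Set.Iio (s + 1)) = Δ \ Set.Iio (s + 1) := by
      ext x
      constructor
      · rintro ⟨h1, _, h3⟩; exact ⟨h1, h3⟩
      · rintro ⟨h1, h3⟩; exact ⟨h1, hΔsub h1, h3⟩
    rw [← heq]
    exact hinter _ _ hΔmem h2
  refine ⟨⟨(p 0 h0).u, Δ \ Set.Iio (s + 1), (p 0 h0).u_subset, (p 0 h0).u_small, hAmem⟩,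
    rfl, rfl, ?_⟩
  intro i hi
  refine ⟨?_, ?_, ?_, ?_⟩
  · exact (hu i hi).le
  · rintro α ⟨⟨hακ, hall⟩, hnotIio⟩
    have hsα : s < α := by
      have h := hnotIio
      simp only [Set.mem_Iio, not_lt, Ordinal.add_one_eq_succ, Order.succ_le_iff] at h
      exact h
    rcases lt_or_ge i α with h | h
    · exact hall i hi h
    · exact hcoh α hακ hall hsα i hi h
  · rintro β ⟨hb1, hb2⟩
    rw [hu i hi] at hb2
    exact absurd hb1 hb2
  · rintro a _ β ⟨hb1, hb2⟩
    rw [hu i hi] at hb2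
    exact absurd hb1 hb2
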